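/- A point [v] ∈ ℙ(H) is a critical point of the function ‖μ‖² (the squared norm of the momentum map for a compact group K ⊆ SU(H)) if and only if v is an eigenvector of the operator μ([v]), i.e. μ([v])·v = λv for some scalar λ. -/

import Mathlib

open scoped BigOperators ComplexInnerProductSpace

/-- The real coefficients `μ_{ξᵢ}([v]) = (1/(2i))⟨v, ξᵢ v⟩/⟨v,v⟩` of the momentum map
of `K ⊆ SU(H)` in an orthonormal basis `ξ` of its Lie algebra `𝔨`. -/
noncomputable def momentumCoeff {n d : ℕ}
    (ξ : Fin d → (EuclideanSpace ℂ (Fin n) →ₗ[ℂ] EuclideanSpace ℂ (Fin n)))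
    (v : EuclideanSpace ℂ (Fin n)) (i : Fin d) : ℝ :=
  (⟪v, ξ i v⟫ / (2 * Complex.I * ⟪v, v⟫)).re

/-- The squared norm `‖μ([v])‖² = Σᵢ μ_{ξᵢ}([v])²` of the momentum map, as a
(scale-invariant) function on `H ∖ {0}`, extended to all of `H`. -/
noncomputable def momentumNormSq {n d : ℕ}
    (ξ : Fin d → (EuclideanSpace ℂ (Fin n) →ₗ[ℂ] EuclideanSpace ℂ (Fin n)))
    (v : EuclideanSpace ℂ (Fin n)) : ℝ :=
  ∑ i : Fin d, (momentumCoeff ξ v i) ^ 2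

set_option maxHeartbeats 1000000 in
/-- Let `K ⊆ SU(H)` be compact with Lie algebra `𝔨` spanned by the
orthonormal (w.r.t. `⟨ξ,ζ⟩ = −Tr(ξζ)`) anti-Hermitian operators `ξ i`.  A point
`[v] ∈ ℙ(H)` is a critical point of `‖μ‖²` (equivalently, since `‖μ‖²` is
scale-invariant, `v ≠ 0` is a critical point of the function `v ↦ ‖μ([v])‖²` on `H`)
if and only if `v` is an eigenvector of the anti-Hermitian operator
`μ([v]) = Σᵢ μ_{ξᵢ}([v]) ξᵢ ∈ 𝔨`, i.e. `μ([v])·v = λ v` for some scalar `λ`. -/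
theorem critical_point_of_momentum_norm_sq_iff_eigenvector
    {n d : ℕ}
    (ξ : Fin d → (EuclideanSpace ℂ (Fin n) →ₗ[ℂ] EuclideanSpace ℂ (Fin n)))
    (hanti : ∀ (i : Fin d) (x y : EuclideanSpace ℂ (Fin n)),
      ⟪ξ i x, y⟫ = -⟪x, ξ i y⟫)
    (horth : ∀ i j : Fin d,
      -(LinearMap.trace ℂ _ ((ξ i) ∘ₗ (ξ j))) = if i = j then 1 else 0)
    (v : EuclideanSpace ℂ (Fin n)) (hv : v ≠ 0) :
    fderiv ℝ (momentumNormSq ξ) v = 0 ↔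
      ∃ lam : ℂ, (∑ i : Fin d, (momentumCoeff ξ v i : ℂ) • ξ i v) = lam • v := by
  classical
  -- conjugation facts
  have hconj : ∀ (i : Fin d) (x y : EuclideanSpace ℂ (Fin n)),
      ⟪x, ξ i y⟫ = -(starRingEnd ℂ) ⟪y, ξ i x⟫ := by
    intro i x y
    rw [inner_conj_symm, hanti i x y, neg_neg]
  have hpure : ∀ (i : Fin d) (w : EuclideanSpace ℂ (Fin n)),
      (⟪w, ξ i w⟫ : ℂ).re = 0 := by
    intro i w
    have h1 := congrArg Complex.re (hconj i w w)
    simp only [Complex.neg_re, Complex.conj_re] at h1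
    linarith
  have him2 : ∀ (i : Fin d) (w : EuclideanSpace ℂ (Fin n)),
      (⟪v, ξ i w⟫ : ℂ).im = (⟪w, ξ i v⟫ : ℂ).im := by
    intro i w
    have h1 := congrArg Complex.im (hconj i v w)
    simpa only [Complex.neg_im, Complex.conj_im, neg_neg] using h1
  have hre2 : ∀ w : EuclideanSpace ℂ (Fin n),
      (⟪v, w⟫ : ℂ).re = (⟪w, v⟫ : ℂ).re := by
    intro w
    have h1 := congrArg Complex.re (inner_conj_symm v w)
    simpa only [Complex.conj_re] using h1.symm
  set pv : ℝ := (⟪v, v⟫ : ℂ).re with hpvdef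
  have hvvc : (⟪v, v⟫ : ℂ) = (pv : ℂ) ∧ 0 < pv := by
    rw [hpvdef]
    rw [inner_self_eq_norm_sq_to_K (𝕜 := ℂ) v]
    exact ⟨by norm_cast, by norm_cast; exact pow_pos (norm_pos_iff.mpr hv) 2⟩
  obtain ⟨hvv, hpv⟩ := hvvc
  have hpv0 : pv ≠ 0 := ne_of_gt hpv
  have h2pv : (2 : ℝ) * pv ≠ 0 := mul_ne_zero two_ne_zero hpv0
  -- the linear maps as continuous linear maps over ℝ
  set T : Fin d → (EuclideanSpace ℂ (Fin n) →L[ℝ] EuclideanSpace ℂ (Fin n)) :=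
    fun i => ((LinearMap.toContinuousLinearMap (ξ i)).restrictScalars ℝ) with hT
  have hTapp : ∀ (i : Fin d) (w : EuclideanSpace ℂ (Fin n)), T i w = ξ i w := by
    intro i w
    simp only [hT, ContinuousLinearMap.coe_restrictScalars',
      LinearMap.coe_toContinuousLinearMap']
  -- momentumCoeff rewritten
  have hcoeff : ∀ (i : Fin d) (w : EuclideanSpace ℂ (Fin n)),
      momentumCoeff ξ w i = (⟪w, ξ i w⟫ : ℂ).im * (2 * (⟪w, w⟫ : ℂ).re)⁻¹ := by
    intro i w
    by_cases hw : w = 0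
    · simp [momentumCoeff, hw]
    · set a : ℝ := (⟪w, ξ i w⟫ : ℂ).im with ha
      set b : ℝ := (⟪w, w⟫ : ℂ).re with hb
      have hq : (⟪w, w⟫ : ℂ) = (b : ℂ) := by
        rw [hb, inner_self_eq_norm_sq_to_K (𝕜 := ℂ) w]; norm_cast
      have hbne : b ≠ 0 := by
        intro h2
        exact (inner_self_ne_zero.mpr hw) (by rw [hq, h2]; norm_num)
      have hz : (⟪w, ξ i w⟫ : ℂ) = (a : ℂ) * Complex.I := by
        apply Complex.ext
        · simp only [Complex.mul_re, Complex.ofReal_re, Complex.ofReal_im,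
            Complex.I_re, Complex.I_im, mul_zero, zero_mul, mul_one, sub_zero,
            zero_sub, hpure i w]
        · simp only [Complex.mul_im, Complex.ofReal_re, Complex.ofReal_im,
            Complex.I_re, Complex.I_im, mul_zero, zero_mul, mul_one, add_zero,
            zero_add]
          exact ha.symm
      show (⟪w, ξ i w⟫ / (2 * Complex.I * ⟪w, w⟫)).re = a * (2 * b)⁻¹
      rw [hz, hq]
      rw [show (2 * Complex.I * (b : ℂ)) = Complex.I * (2 * (b : ℂ)) from by ring,
        show ((a : ℂ) * Complex.I) = Complex.I * (a : ℂ) from by ring,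
        mul_div_mul_left _ _ Complex.I_ne_zero]
      rw [show ((a : ℂ)) / (2 * (b : ℂ)) = ((a * (2 * b)⁻¹ : ℝ) : ℂ) from by
        push_cast
        rw [div_eq_mul_inv]]
      exact Complex.ofReal_re _
  -- the function rewritten
  have hEq : momentumNormSq ξ = fun w => ∑ i : Fin d,
      ((⟪w, T i w⟫ : ℂ).im * (2 * (⟪w, w⟫ : ℂ).re)⁻¹) *
      ((⟪w, T i w⟫ : ℂ).im * (2 * (⟪w, w⟫ : ℂ).re)⁻¹) := by
    funext w
    unfold momentumNormSq
    refine Finset.sum_congr rfl fun i _ => ?_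
    rw [hTapp i w, hcoeff i w, pow_two]
  -- derivative pieces
  set P : EuclideanSpace ℂ (Fin n) →L[ℝ] ℝ :=
    Complex.reCLM.comp ((fderivInnerCLM ℂ (v, v)).comp
      ((ContinuousLinearMap.id ℝ _).prod (ContinuousLinearMap.id ℝ _))) with hP
  set Hc : Fin d → (EuclideanSpace ℂ (Fin n) →L[ℝ] ℝ) :=
    fun i => Complex.imCLM.comp ((fderivInnerCLM ℂ (v, T i v)).comp
      ((ContinuousLinearMap.id ℝ _).prod (T i))) with hHc
  set A : Fin d → (EuclideanSpace ℂ (Fin n) →L[ℝ] ℝ) := fun i =>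
    ((⟪v, T i v⟫ : ℂ).im) • ((-(((2:ℝ) * pv) ^ 2)⁻¹) • ((2:ℝ) • P))
      + ((2 * pv)⁻¹) • Hc i with hA
  set D : Fin d → (EuclideanSpace ℂ (Fin n) →L[ℝ] ℝ) := fun i =>
    ((⟪v, T i v⟫ : ℂ).im * (2 * pv)⁻¹) • A i
      + ((⟪v, T i v⟫ : ℂ).im * (2 * pv)⁻¹) • A i with hD
  have hp' : HasFDerivAt (fun w : EuclideanSpace ℂ (Fin n) => (⟪w, w⟫ : ℂ).re) P v :=
    (Complex.reCLM.hasFDerivAt).comp v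
      ((hasFDerivAt_id v).inner ℂ (hasFDerivAt_id v))
  have hg : ∀ i : Fin d, HasFDerivAt
      (fun w => (⟪w, T i w⟫ : ℂ).im * (2 * (⟪w, w⟫ : ℂ).re)⁻¹) (A i) v := by
    intro i
    have hinner : HasFDerivAt (fun w => (⟪w, T i w⟫ : ℂ))
        ((fderivInnerCLM ℂ (v, T i v)).comp
          ((ContinuousLinearMap.id ℝ _).prod (T i))) v :=
      (hasFDerivAt_id v).inner ℂ ((T i).hasFDerivAt)
    have him : HasFDerivAt (fun w => (⟪w, T i w⟫ : ℂ).im) (Hc i) v :=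
      (Complex.imCLM.hasFDerivAt).comp v hinner
    have h2p : HasFDerivAt (fun w : EuclideanSpace ℂ (Fin n) =>
        2 * (⟪w, w⟫ : ℂ).re) ((2:ℝ) • P) v := hp'.const_mul 2
    have hinv : HasFDerivAt (fun w : EuclideanSpace ℂ (Fin n) =>
        (2 * (⟪w, w⟫ : ℂ).re)⁻¹) ((-(((2:ℝ) * pv) ^ 2)⁻¹) • ((2:ℝ) • P)) v :=
      (hasDerivAt_inv h2pv).comp_hasFDerivAt v h2p
    exact him.mul hinv
  have hsum : HasFDerivAt (fun w => ∑ i : Fin d,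
      ((⟪w, T i w⟫ : ℂ).im * (2 * (⟪w, w⟫ : ℂ).re)⁻¹) *
      ((⟪w, T i w⟫ : ℂ).im * (2 * (⟪w, w⟫ : ℂ).re)⁻¹)) (∑ i : Fin d, D i) v :=
    HasFDerivAt.fun_sum (fun i _ => (hg i).mul (hg i))
  -- the auxiliary vector
  set F : ℝ := momentumNormSq ξ v with hF
  set u : EuclideanSpace ℂ (Fin n) :=
    (∑ i : Fin d, (momentumCoeff ξ v i : ℂ) • ξ i v)
      - (((2 * F : ℝ) : ℂ) * Complex.I) • v with hu
  have hfi : ∀ i : Fin d, momentumCoeff ξ v i = (⟪v, ξ i v⟫ : ℂ).im * (2 * pv)⁻¹ :=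
    fun i => hcoeff i v
  -- im ⟪w, u⟫ as a sum
  have himu : ∀ w : EuclideanSpace ℂ (Fin n), (⟪w, u⟫ : ℂ).im
      = ∑ i : Fin d, (momentumCoeff ξ v i * (⟪w, ξ i v⟫ : ℂ).im
          - 2 * (momentumCoeff ξ v i * momentumCoeff ξ v i) * (⟪w, v⟫ : ℂ).re) := by
    intro w
    have h1 : (⟪w, u⟫ : ℂ).im
        = (∑ i : Fin d, momentumCoeff ξ v i * (⟪w, ξ i v⟫ : ℂ).im)
          - (2 * F) * (⟪w, v⟫ : ℂ).re := by
      rw [hu]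
      rw [inner_sub_right, inner_smul_right, inner_sum]
      simp only [inner_smul_right]
      rw [Complex.sub_im, Complex.im_sum]
      congr 1
      · refine Finset.sum_congr rfl fun i _ => ?_
        simp only [Complex.mul_im, Complex.ofReal_re, Complex.ofReal_im,
          zero_mul, add_zero]
      · simp only [Complex.mul_im, Complex.mul_re, Complex.I_re, Complex.I_im,
          Complex.ofReal_re, Complex.ofReal_im]
        ring
    rw [h1, Finset.sum_sub_distrib]
    congr 1
    rw [← Finset.sum_mul]
    congr 1
    rw [hF]
    unfold momentumNormSq
    rw [Finset.mul_sum]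
    refine Finset.sum_congr rfl fun i _ => ?_
    ring
  -- evaluation of the derivative
  have happ : ∀ w : EuclideanSpace ℂ (Fin n),
      (∑ i : Fin d, D i) w = pv⁻¹ * 2 * (⟪w, u⟫ : ℂ).im := by
    intro w
    rw [himu w, Finset.mul_sum, ContinuousLinearMap.sum_apply]
    refine Finset.sum_congr rfl fun i _ => ?_
    rw [hfi i]
    simp only [hD, hA, hHc, hP, ContinuousLinearMap.add_apply,
      ContinuousLinearMap.smul_apply, smul_eq_mul, ContinuousLinearMap.coe_comp',
      Function.comp_apply, ContinuousLinearMap.prod_apply,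
      ContinuousLinearMap.coe_id', id_eq, fderivInnerCLM_apply,
      Complex.reCLM_apply, Complex.imCLM_apply, hTapp, Complex.add_im,
      Complex.add_re]
    rw [him2 i w, hre2 w]
    field_simp
    ring
  -- main rewriting of the goal
  rw [hEq, hsum.fderiv]
  have hzero : (∑ i : Fin d, D i) = 0 ↔ u = 0 := by
    constructor
    · intro h0
      have hw : ∀ w : EuclideanSpace ℂ (Fin n), (⟪w, u⟫ : ℂ).im = 0 := by
        intro w
        have h1 : (∑ i : Fin d, D i) w = 0 := by rw [h0]; rfl
        rw [happ w] at h1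
        have h2 : pv⁻¹ * 2 ≠ 0 := by simp [hpv0]
        exact (mul_eq_zero.mp h1).resolve_left h2
      have h3 := hw (Complex.I • u)
      rw [inner_smul_left] at h3
      simp only [Complex.conj_I, neg_mul, Complex.neg_im, Complex.mul_im,
        Complex.I_re, Complex.I_im, zero_mul, one_mul, zero_add,
        neg_eq_zero] at h3
      have h4 : (⟪u, u⟫ : ℂ) = 0 := by
        apply Complex.ext
        · rw [Complex.zero_re]; exact h3
        · rw [Complex.zero_im]
          rw [inner_self_eq_norm_sq_to_K (𝕜 := ℂ) u]
          norm_cast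
      exact inner_self_eq_zero.mp h4
    · intro h0
      apply ContinuousLinearMap.ext
      intro w
      rw [ContinuousLinearMap.zero_apply, happ w, h0]
      rw [inner_zero_right]
      simp only [Complex.zero_im, mul_zero]
  rw [hzero]
  constructor
  · intro h0
    refine ⟨((2 * F : ℝ) : ℂ) * Complex.I, ?_⟩
    rw [hu] at h0
    exact sub_eq_zero.mp h0
  · rintro ⟨lam, hlam⟩
    have hterm : ∀ i : Fin d, (momentumCoeff ξ v i : ℂ) * ⟪v, ξ i v⟫
        = ((momentumCoeff ξ v i * (⟪v, ξ i v⟫ : ℂ).im : ℝ) : ℂ) * Complex.I := by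
      intro i
      set e : ℝ := (⟪v, ξ i v⟫ : ℂ).im with he
      have hz : (⟪v, ξ i v⟫ : ℂ) = (e : ℂ) * Complex.I := by
        apply Complex.ext
        · simp only [Complex.mul_re, Complex.ofReal_re, Complex.ofReal_im,
            Complex.I_re, Complex.I_im, mul_zero, zero_mul, mul_one, sub_zero,
            zero_sub, hpure i v]
        · simp only [Complex.mul_im, Complex.ofReal_re, Complex.ofReal_im,
            Complex.I_re, Complex.I_im, mul_zero, zero_mul, mul_one, add_zero,
            zero_add]
          exact he.symm
      rw [hz]
      push_cast
      ring
    have hterm2 : ∀ i : Fin d, momentumCoeff ξ v i * (⟪v, ξ i v⟫ : ℂ).im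
        = 2 * momentumCoeff ξ v i ^ 2 * pv := by
      intro i
      rw [hfi i]
      field_simp
    have hsum2 : (∑ i : Fin d, momentumCoeff ξ v i * (⟪v, ξ i v⟫ : ℂ).im)
        = 2 * F * pv := by
      rw [Finset.sum_congr rfl fun i _ => hterm2 i]
      have h5 : 2 * F * pv = ∑ i : Fin d, 2 * momentumCoeff ξ v i ^ 2 * pv := by
        rw [hF]
        unfold momentumNormSq
        rw [Finset.mul_sum, Finset.sum_mul]
      rw [h5]
    have hAv : (⟪v, ∑ i : Fin d, (momentumCoeff ξ v i : ℂ) • ξ i v⟫ : ℂ)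
        = ((2 * F * pv : ℝ) : ℂ) * Complex.I := by
      rw [inner_sum]
      simp only [inner_smul_right]
      rw [Finset.sum_congr rfl fun i _ => hterm i, ← Finset.sum_mul,
        ← Complex.ofReal_sum, hsum2]
    rw [hlam] at hAv
    rw [inner_smul_right, hvv] at hAv
    have hpvc : (pv : ℂ) ≠ 0 := by exact_mod_cast hpv0
    have hlam2 : lam = ((2 * F : ℝ) : ℂ) * Complex.I := by
      have h6 : lam * (pv : ℂ) = ((2 * F : ℝ) : ℂ) * Complex.I * (pv : ℂ) := by
        push_cast at hAv ⊢
        linear_combination hAv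
      exact mul_right_cancel₀ hpvc h6
    rw [hu, hlam, hlam2, sub_self]
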